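/- For every π ∈ S_n, the minimum of inv over the coset π·Z_n satisfies min_{0 ≤ i < n} inv(π·c_n^i) ≤ (2n² − 3n + 1)/6. -/

import Mathlib

open Finset
open Fin.NatCast
open Fin.CommRing

def inversions {n : ℕ} (π : Equiv.Perm (Fin n)) : ℕ :=
  (Finset.univ.filter (fun p : Fin n × Fin n => p.1 < p.2 ∧ π p.2 < π p.1)).card

def winv {n : ℕ} (π : Equiv.Perm (Fin n)) : ℤ :=
  ∑ p ∈ Finset.univ.filter (fun p : Fin n × Fin n => p.1 < p.2 ∧ π p.2 < π p.1),
    ((π p.1 : ℤ) - (π p.2 : ℤ))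

def cwinv {n : ℕ} (π : Equiv.Perm (Fin n)) : ℤ :=
  n * inversions π - 2 * winv π

lemma mod_cases (a n : ℕ) (h : a < 2*n) : a % n = if a < n then a else a - n := by
  split
  · exact Nat.mod_eq_of_lt ‹_›
  · rw [Nat.mod_eq_sub_mod (by omega)]; exact Nat.mod_eq_of_lt (by omega)

lemma rot_pow {m : ℕ} (i : ℕ) (z : Fin (m+1)) :
    ((finRotate (m+1)) ^ i) z = z + (i : Fin (m+1)) := by
  induction i with
  | zero => simp
  | succ k ih =>
    rw [pow_succ', Equiv.Perm.mul_apply, ih, finRotate_succ_apply]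
    push_cast
    ring

lemma rot_pow_inv {m : ℕ} (i : ℕ) (z : Fin (m+1)) :
    (((finRotate (m+1)) ^ i)⁻¹ : Equiv.Perm (Fin (m+1))) z = z - (i : Fin (m+1)) := by
  rw [Equiv.Perm.inv_def, Equiv.symm_apply_eq, rot_pow]
  ring

lemma inv_as_sum {n : ℕ} (ρ : Equiv.Perm (Fin n)) :
    inversions ρ = ∑ a : Fin n × Fin n, if a.1 < a.2 ∧ ρ⁻¹ a.2 < ρ⁻¹ a.1 then 1 else 0 := by
  rw [inversions, ← Finset.card_filter]
  apply Finset.card_nbij' (fun a => (ρ a.2, ρ a.1)) (fun a => (ρ⁻¹ a.2, ρ⁻¹ a.1))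
  · intro a ha
    simp only [Finset.mem_coe, Finset.mem_filter, Finset.mem_univ, true_and] at ha ⊢
    simpa using ⟨ha.2, ha.1⟩
  · intro a ha
    simp only [Finset.mem_coe, Finset.mem_filter, Finset.mem_univ, true_and] at ha ⊢
    exact ⟨ha.2, by simpa using ha.1⟩
  · intro a _; simp
  · intro a _; simp

lemma count_rot {m : ℕ} (x y : Fin (m+1)) (hxy : x ≠ y) :
    ∑ i ∈ Finset.range (m+1),
      (if x - (i : Fin (m+1)) < y - (i : Fin (m+1)) then (1:ℕ) else 0)
      = (x - y : Fin (m+1)).val := by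
  have hd0 : (y - x : Fin (m+1)) ≠ 0 := fun h => hxy (sub_eq_zero.mp h).symm
  have hdval : 0 < (y - x : Fin (m+1)).val := by
    rcases Nat.eq_zero_or_pos (y - x : Fin (m+1)).val with h | h
    · exact absurd (Fin.ext h : (y - x : Fin (m+1)) = 0) hd0
    · exact h
  rw [← Fin.sum_univ_eq_sum_range (fun i => if x - (i : Fin (m+1)) < y - (i : Fin (m+1)) then (1:ℕ) else 0) (m+1)]
  simp only [Fin.cast_val_eq_self]
  rw [← Equiv.sum_comp (Equiv.subLeft x) (fun i : Fin (m+1) => if x - i < y - i then (1:ℕ) else 0)]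
  have key : ∀ p : Fin (m+1), (x - (Equiv.subLeft x p) < y - (Equiv.subLeft x p)) ↔ p.val < m + 1 - (y - x : Fin (m+1)).val := by
    intro p
    have h1 : x - (Equiv.subLeft x p) = p := by simp [Equiv.subLeft]
    have h2 : y - (Equiv.subLeft x p) = p + (y - x) := by simp [Equiv.subLeft]; ring
    rw [h1, h2, Fin.lt_def, Fin.val_add]
    have hm := mod_cases (p.val + (y - x : Fin (m+1)).val) (m+1) (by have := p.isLt; have := (y - x : Fin (m+1)).isLt; omega)
    have := p.isLt; have := (y - x : Fin (m+1)).isLt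
    rw [hm]; split <;> omega
  calc (∑ i : Fin (m+1), if x - (Equiv.subLeft x) i < y - (Equiv.subLeft x) i then (1:ℕ) else 0)
      = ∑ i : Fin (m+1), if (i : Fin (m+1)).val < m + 1 - (y - x : Fin (m+1)).val then (1:ℕ) else 0 := by
        refine Finset.sum_congr rfl fun p _ => ?_
        rw [if_congr (key p) rfl rfl]
    _ = ((Finset.range (m+1)).filter (fun j => j < m + 1 - (y - x : Fin (m+1)).val)).card := by
        rw [Finset.card_filter, ← Fin.sum_univ_eq_sum_range]
    _ = (x - y : Fin (m+1)).val := by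
        have hfil : (Finset.range (m+1)).filter (fun j => j < m + 1 - (y - x : Fin (m+1)).val)
            = Finset.range (m + 1 - (y - x : Fin (m+1)).val) := by
          ext j; simp only [Finset.mem_filter, Finset.mem_range]; omega
        rw [hfil, Finset.card_range]
        have hsum : ((x - y) + (y - x) : Fin (m+1)) = 0 := by ring
        have hv := congrArg Fin.val hsum
        rw [Fin.val_add] at hv
        have h2 := mod_cases ((x - y : Fin (m+1)).val + (y - x : Fin (m+1)).val) (m+1)
          (by have := (x - y : Fin (m+1)).isLt; have := (y - x : Fin (m+1)).isLt; omega)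
        have := (x - y : Fin (m+1)).isLt; have := (y - x : Fin (m+1)).isLt
        have h0 : ((0:Fin (m+1))).val = 0 := rfl
        rw [h2, h0] at hv
        split at hv <;> omega

lemma sum_distinct_le : ∀ (k : ℕ) (T : Finset ℕ) (N : ℤ), T.card = k → (∀ t ∈ T, (t:ℤ) ≤ N) →
    2 * ∑ t ∈ T, (t:ℤ) ≤ 2 * k * N - k * (k - 1) := by
  intro k
  induction k with
  | zero => intro T N hc _; rw [Finset.card_eq_zero.mp hc]; simp
  | succ k ih =>
    intro T N hc hN
    have hne : T.Nonempty := Finset.card_pos.mp (by omega)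
    set t0 := T.max' hne with ht0
    have ht0T : t0 ∈ T := T.max'_mem hne
    have hT' : (T.erase t0).card = k := by rw [Finset.card_erase_of_mem ht0T, hc]; omega
    have hbound : ∀ t ∈ T.erase t0, (t:ℤ) ≤ (t0:ℤ) - 1 := by
      intro t ht
      have h1 : t ≠ t0 := Finset.ne_of_mem_erase ht
      have h2 : t ≤ t0 := T.le_max' t (Finset.mem_of_mem_erase ht)
      have : t < t0 := lt_of_le_of_ne h2 h1
      omega
    have ihh := ih (T.erase t0) ((t0:ℤ) - 1) hT' hbound
    have hsum : ∑ t ∈ T, (t:ℤ) = (t0:ℤ) + ∑ t ∈ T.erase t0, (t:ℤ) :=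
      (Finset.add_sum_erase T _ ht0T).symm
    have ht0N : (t0:ℤ) ≤ N := hN t0 ht0T
    have hk : (0:ℤ) ≤ k := Int.ofNat_nonneg k
    push_cast
    push_cast at ihh
    nlinarith [ihh, ht0N, hk]

lemma gauss1 (n : ℕ) : 2 * ∑ k ∈ range n, (k:ℤ) = n^2 - n := by
  induction n with
  | zero => simp
  | succ m ih => rw [sum_range_succ]; push_cast; push_cast at ih; linarith

lemma gauss2 (n : ℕ) : 6 * ∑ k ∈ range n, (k:ℤ)^2 = 2*n^3 - 3*n^2 + n := by
  induction n with
  | zero => simp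
  | succ m ih => rw [sum_range_succ]; push_cast; push_cast at ih; nlinarith [ih]

theorem min_inv_coset_le {n : ℕ} (hn : 0 < n) (π : Equiv.Perm (Fin n)) :
    ∃ i < n, 6 * (inversions (π * (finRotate n) ^ i) : ℤ)
      ≤ 2 * n ^ 2 - 3 * n + 1 := by
  obtain ⟨m, rfl⟩ : ∃ m, n = m + 1 := ⟨n - 1, by omega⟩
  set σ := π⁻¹ with hσ
  -- Step 1: rewrite the total sum of inversions over the coset
  have hS : ∑ i ∈ range (m+1), inversions (π * (finRotate (m+1)) ^ i)
      = ∑ a : Fin (m+1) × Fin (m+1), if a.1 < a.2 then (σ a.2 - σ a.1 : Fin (m+1)).val else 0 := by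
    have step1 : ∀ i ∈ range (m+1), inversions (π * (finRotate (m+1)) ^ i)
        = ∑ a : Fin (m+1) × Fin (m+1),
            if a.1 < a.2 ∧ σ a.2 - (i : Fin (m+1)) < σ a.1 - (i : Fin (m+1)) then 1 else 0 := by
      intro i _
      rw [inv_as_sum]
      refine Finset.sum_congr rfl fun a _ => ?_
      have hinv : ∀ z : Fin (m+1), ((π * (finRotate (m+1)) ^ i)⁻¹ : Equiv.Perm (Fin (m+1))) z
          = σ z - (i : Fin (m+1)) := by
        intro z
        rw [mul_inv_rev, Equiv.Perm.mul_apply, rot_pow_inv, hσ]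
      rw [hinv, hinv]
    rw [Finset.sum_congr rfl step1, Finset.sum_comm]
    refine Finset.sum_congr rfl fun a _ => ?_
    by_cases h : a.1 < a.2
    · simp only [h, true_and, if_true]
      have hne : σ a.2 ≠ σ a.1 := fun hc => (ne_of_lt h).symm (σ.injective hc)
      rw [count_rot (σ a.2) (σ a.1) hne]
    · simp [h]
  -- Step 2: per-first-coordinate bound
  have hv : ∀ v : Fin (m+1),
      2 * ∑ u ∈ Finset.univ.filter (fun u : Fin (m+1) => v < u), ((σ u - σ v : Fin (m+1)).val : ℤ)
        ≤ 2 * ((m:ℤ) - v.val) * m - ((m:ℤ) - v.val) * (((m:ℤ) - v.val) - 1) := by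
    intro v
    set s : Finset (Fin (m+1)) := Finset.univ.filter (fun u => v < u) with hs
    have hinj : ∀ x ∈ s, ∀ y ∈ s, (σ x - σ v : Fin (m+1)).val = (σ y - σ v : Fin (m+1)).val → x = y := by
      intro x _ y _ hxy
      have : σ x - σ v = σ y - σ v := Fin.ext hxy
      have : σ x = σ y := sub_left_inj.mp this -- Fin group
      exact σ.injective this
    set T : Finset ℕ := s.image (fun u => (σ u - σ v : Fin (m+1)).val) with hT
    have hcard : T.card = m - v.val := by
      rw [hT, Finset.card_image_of_injOn hinj]
      have : s = Finset.Ioi v := by ext u; simp [hs, Finset.mem_Ioi]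
      rw [this, Fin.card_Ioi]
      omega
    have hsum : ∑ t ∈ T, (t:ℤ) = ∑ u ∈ s, ((σ u - σ v : Fin (m+1)).val : ℤ) := by
      rw [hT, Finset.sum_image hinj]
    have hle : ∀ t ∈ T, (t:ℤ) ≤ (m:ℤ) := by
      intro t ht
      rw [hT, Finset.mem_image] at ht
      obtain ⟨u, _, rfl⟩ := ht
      have := (σ u - σ v : Fin (m+1)).isLt
      omega
    have := sum_distinct_le (m - v.val) T (m:ℤ) hcard hle
    rw [hsum] at this
    have hcast : ((m - v.val : ℕ) : ℤ) = (m:ℤ) - v.val := by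
      have := v.isLt; omega
    rw [hcast] at this
    exact this
  -- Step 3: total bound
  have htot : 6 * ((∑ i ∈ range (m+1), inversions (π * (finRotate (m+1)) ^ i) : ℕ) : ℤ)
      ≤ 2 * (m+1:ℤ)^3 - 3 * (m+1:ℤ)^2 + (m+1:ℤ) := by
    have hcast : ((∑ i ∈ range (m+1), inversions (π * (finRotate (m+1)) ^ i) : ℕ) : ℤ)
        = ∑ v : Fin (m+1), ∑ u ∈ Finset.univ.filter (fun u : Fin (m+1) => v < u),
            ((σ u - σ v : Fin (m+1)).val : ℤ) := by
      rw [hS]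
      push_cast
      rw [Fintype.sum_prod_type]
      refine Finset.sum_congr rfl fun v _ => ?_
      rw [← Finset.sum_filter]
    rw [hcast]
    have h2 : 2 * ∑ v : Fin (m+1), ∑ u ∈ Finset.univ.filter (fun u : Fin (m+1) => v < u),
          ((σ u - σ v : Fin (m+1)).val : ℤ)
        ≤ ∑ v : Fin (m+1), (2 * ((m:ℤ) - v.val) * m - ((m:ℤ) - v.val) * (((m:ℤ) - v.val) - 1)) := by
      rw [Finset.mul_sum]
      exact Finset.sum_le_sum fun v _ => hv v
    have h3 : ∑ v : Fin (m+1), (2 * ((m:ℤ) - v.val) * m - ((m:ℤ) - v.val) * (((m:ℤ) - v.val) - 1))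
        = ∑ k ∈ range (m+1), (2 * ((m:ℤ) - k) * m - ((m:ℤ) - k) * (((m:ℤ) - k) - 1)) :=
      Fin.sum_univ_eq_sum_range (fun k => 2 * ((m:ℤ) - k) * m - ((m:ℤ) - k) * (((m:ℤ) - k) - 1)) (m+1)
    have h4 : ∑ k ∈ range (m+1), (2 * ((m:ℤ) - k) * m - ((m:ℤ) - k) * (((m:ℤ) - k) - 1))
        = (m+1) * ((m:ℤ)^2 + m) - (∑ k ∈ range (m+1), (k:ℤ)^2) - ∑ k ∈ range (m+1), (k:ℤ) := by
      have hcong : ∀ k ∈ range (m+1), 2 * ((m:ℤ) - k) * m - ((m:ℤ) - k) * (((m:ℤ) - k) - 1)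
          = ((m:ℤ)^2 + m) - (k:ℤ)^2 - (k:ℤ) := fun k _ => by ring
      rw [Finset.sum_congr rfl hcong, Finset.sum_sub_distrib, Finset.sum_sub_distrib,
        Finset.sum_const, Finset.card_range, nsmul_eq_mul]
      push_cast
      ring
    rw [h3, h4] at h2
    have g1 := gauss1 (m+1)
    have g2 := gauss2 (m+1)
    push_cast at g1 g2 h2 ⊢
    linarith
  -- Step 4: pigeonhole
  have hnon : (range (m+1)).Nonempty := ⟨0, by simp⟩
  have hsum2 : ∑ i ∈ range (m+1), (6 * (inversions (π * (finRotate (m+1)) ^ i) : ℤ))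
      ≤ ∑ i ∈ range (m+1), (2 * ((m:ℤ)+1)^2 - 3*((m:ℤ)+1) + 1) := by
    rw [← Finset.mul_sum, Finset.sum_const, Finset.card_range, nsmul_eq_mul]
    push_cast at htot ⊢
    nlinarith [htot]
  obtain ⟨i, hi, hle⟩ := Finset.exists_le_of_sum_le hnon hsum2
  exact ⟨i, Finset.mem_range.mp hi, by push_cast; linarith⟩
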